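/- Let A be a finite multiset in ℤ_p and let A_1,…,A_k be a Liouville partition of A. Let B_1,…,B_k be finite multisets in ℤ_p such that B_g is weakly equivalent to A_g for g = 1,…,k. Then B_1,…,B_k form a Liouville partition of their multiset union B; in particular, B_1,…,B_k are pairwise disjoint. -/

import Mathlib

open Filter

/-- `padicDist p m a` is `d_m(a) = min {|h| : h ∈ ℤ, a ≡ h (mod p^m ℤ_p)}`. -/
noncomputable def padicDist (p : ℕ) [Fact p.Prime] (m : ℕ) (a : ℤ_[p]) : ℕ :=
  sInf {k : ℕ | ∃ h : ℤ, h.natAbs = k ∧ (p : ℤ_[p]) ^ m ∣ a - (h : ℤ_[p])}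

/-- `a ∈ ℤ_p` is a p-adic Liouville number if `a ∉ ℤ` and
`liminf_{m→∞} d_m(a)/m < +∞`. -/
def IsPadicLiouville (p : ℕ) [Fact p.Prime] (a : ℤ_[p]) : Prop :=
  (∀ n : ℤ, a ≠ (n : ℤ_[p])) ∧
    liminf (fun m : ℕ => (((padicDist p m a : ℝ) / (m : ℝ)) : EReal)) atTop < (⊤ : EReal)

/-- Two finite multisets in `ℤ_p` are weakly equivalent: there exist orderings
`a_1,…,a_n`, `b_1,…,b_n`, a constant `c > 0`, and for each `m ≥ 1` a permutation `σ_m`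
with `d_m(a_{σ_m i} - b_i) ≤ c m`. -/
def WeaklyEquivalent (p : ℕ) [Fact p.Prime] (A B : Multiset ℤ_[p]) : Prop :=
  ∃ (n : ℕ) (a b : Fin n → ℤ_[p]) (c : ℝ),
    A = ↑(List.ofFn a) ∧ B = ↑(List.ofFn b) ∧ 0 < c ∧
    ∀ m : ℕ, 1 ≤ m → ∃ σ : Equiv.Perm (Fin n),
      ∀ i, (padicDist p m (a (σ i) - b i) : ℝ) ≤ c * m

/-- Two finite multisets in `ℤ_p` are equivalent: there exist orderings with
`a_i - b_i ∈ ℤ` for all `i`. -/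
def EquivalentMultisets (p : ℕ) [Fact p.Prime] (A B : Multiset ℤ_[p]) : Prop :=
  ∃ (n : ℕ) (a b : Fin n → ℤ_[p]),
    A = ↑(List.ofFn a) ∧ B = ↑(List.ofFn b) ∧
    ∀ i, ∃ k : ℤ, a i - b i = (k : ℤ_[p])

/-- `P 0, …, P (k-1)` form a Liouville partition of `A`: their multiset union is `A` and
no two elements of distinct parts differ by an integer or a p-adic Liouville number. -/
def IsLiouvillePartition (p : ℕ) [Fact p.Prime] (A : Multiset ℤ_[p]) {k : ℕ}
    (P : Fin k → Multiset ℤ_[p]) : Prop :=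
  (∑ g, P g) = A ∧
    ∀ g h : Fin k, g ≠ h → ∀ x ∈ P g, ∀ y ∈ P h,
      ¬ ((∃ n : ℤ, x - y = (n : ℤ_[p])) ∨ IsPadicLiouville p (x - y))

/-- A multiset is p-adic non-Liouville if it contains no p-adic Liouville number. -/
def PadicNonLiouvilleMultiset (p : ℕ) [Fact p.Prime] (A : Multiset ℤ_[p]) : Prop :=
  ∀ a ∈ A, ¬ IsPadicLiouville p a

/-- The difference multiset `A - A = {a - a' : a, a' ∈ A}`. -/
noncomputable def diffMultiset (p : ℕ) [Fact p.Prime] (A : Multiset ℤ_[p]) : Multiset ℤ_[p] :=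
  A.bind fun x => A.map fun y => x - y

section Helpers
variable {p : ℕ} [Fact p.Prime]

lemma padicDist_le (m : ℕ) (a : ℤ_[p]) (h : ℤ) (hd : (p : ℤ_[p]) ^ m ∣ a - (h : ℤ_[p])) :
    padicDist p m a ≤ h.natAbs :=
  Nat.sInf_le ⟨h, rfl, hd⟩

lemma padicDist_spec (m : ℕ) (a : ℤ_[p]) :
    ∃ h : ℤ, h.natAbs = padicDist p m a ∧ (p : ℤ_[p]) ^ m ∣ a - (h : ℤ_[p]) := by
  have hne : {k : ℕ | ∃ h : ℤ, h.natAbs = k ∧ (p : ℤ_[p]) ^ m ∣ a - (h : ℤ_[p])}.Nonempty := by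
    refine ⟨((a.appr m : ℤ)).natAbs, (a.appr m : ℤ), rfl, ?_⟩
    have := PadicInt.appr_spec m a
    rw [Ideal.mem_span_singleton] at this
    simpa using this
  exact Nat.sInf_mem hne

lemma padicDist_neg_le (m : ℕ) (a : ℤ_[p]) : padicDist p m (-a) ≤ padicDist p m a := by
  obtain ⟨h, hn, hd⟩ := padicDist_spec m a
  calc padicDist p m (-a) ≤ (-h).natAbs := by
        refine padicDist_le m (-a) (-h) ?_
        have : (-a) - ((-h : ℤ) : ℤ_[p]) = -(a - (h : ℤ_[p])) := by push_cast; ring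
        rw [this]; exact hd.neg_right
    _ = padicDist p m a := by rw [Int.natAbs_neg, hn]

lemma padicDist_neg (m : ℕ) (a : ℤ_[p]) : padicDist p m (-a) = padicDist p m a :=
  le_antisymm (padicDist_neg_le m a) (by simpa using padicDist_neg_le m (-a))

lemma padicDist_add_le (m : ℕ) (a b : ℤ_[p]) :
    padicDist p m (a + b) ≤ padicDist p m a + padicDist p m b := by
  obtain ⟨h1, hn1, hd1⟩ := padicDist_spec m a
  obtain ⟨h2, hn2, hd2⟩ := padicDist_spec m b
  calc padicDist p m (a + b) ≤ (h1 + h2).natAbs := by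
        refine padicDist_le m (a + b) (h1 + h2) ?_
        have : (a + b) - ((h1 + h2 : ℤ) : ℤ_[p]) = (a - (h1 : ℤ_[p])) + (b - (h2 : ℤ_[p])) := by
          push_cast; ring
        rw [this]; exact dvd_add hd1 hd2
    _ ≤ h1.natAbs + h2.natAbs := Int.natAbs_add_le h1 h2
    _ = _ := by rw [hn1, hn2]

/-- If `d_m(a) ≤ K m` frequently, then `a` is an integer or Liouville. -/
lemma int_or_liouville_of_frequently {a : ℤ_[p]} {K : ℝ}
    (hf : ∃ᶠ m : ℕ in atTop, 1 ≤ m ∧ (padicDist p m a : ℝ) ≤ K * m) :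
    (∃ n : ℤ, a = (n : ℤ_[p])) ∨
      ((∀ n : ℤ, a ≠ (n : ℤ_[p])) ∧
        liminf (fun m : ℕ => (((padicDist p m a : ℝ) / (m : ℝ)) : EReal)) atTop < (⊤ : EReal)) := by
  by_cases hint : ∃ n : ℤ, a = (n : ℤ_[p])
  · exact Or.inl hint
  · refine Or.inr ⟨fun n hn => hint ⟨n, hn⟩, ?_⟩
    have hle : liminf (fun m : ℕ => (((padicDist p m a : ℝ) / (m : ℝ)) : EReal)) atTop
        ≤ (K : EReal) := by
      apply liminf_le_of_frequently_le'
      refine hf.mono ?_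
      rintro m ⟨hm1, hm⟩
      have hmpos : (0 : ℝ) < m := by exact_mod_cast hm1
      have : (padicDist p m a : ℝ) / m ≤ K := by
        rw [div_le_iff₀ hmpos]; linarith
      calc ((padicDist p m a : ℝ) : EReal) / ((m : ℝ) : EReal)
          = (((padicDist p m a : ℝ) / (m : ℝ) : ℝ) : EReal) := (EReal.coe_div _ _).symm
        _ ≤ (K : EReal) := EReal.coe_le_coe_iff.mpr this
    exact lt_of_le_of_lt hle (EReal.coe_lt_top K)

lemma frequently_of_int_or_liouville {a : ℤ_[p]}
    (hxy : (∃ n : ℤ, a = (n : ℤ_[p])) ∨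
      ((∀ n : ℤ, a ≠ (n : ℤ_[p])) ∧
        liminf (fun m : ℕ => (((padicDist p m a : ℝ) / (m : ℝ)) : EReal)) atTop < (⊤ : EReal))) :
    ∃ C : ℝ, ∃ᶠ m : ℕ in atTop, 1 ≤ m ∧ (padicDist p m a : ℝ) ≤ C * m := by
  rcases hxy with ⟨n, hn⟩ | ⟨_, hlim⟩
  · refine ⟨(n.natAbs : ℝ), Eventually.frequently ?_⟩
    filter_upwards [eventually_ge_atTop 1] with m hm
    refine ⟨hm, ?_⟩
    have hd : padicDist p m a ≤ n.natAbs := by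
      refine padicDist_le m a n ?_
      rw [hn, sub_self]
      exact dvd_zero _
    have h1 : (1 : ℝ) ≤ m := by exact_mod_cast hm
    have h0 : (0 : ℝ) ≤ (n.natAbs : ℝ) := by positivity
    calc (padicDist p m a : ℝ) ≤ (n.natAbs : ℝ) := by exact_mod_cast hd
      _ = (n.natAbs : ℝ) * 1 := by ring
      _ ≤ (n.natAbs : ℝ) * m := by nlinarith
  · obtain ⟨C, hC, -⟩ := EReal.lt_iff_exists_real_btwn.mp hlim
    refine ⟨C, ?_⟩
    have hfreq := frequently_lt_of_liminf_lt (f := atTop)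
      (u := fun m : ℕ => (((padicDist p m a : ℝ) / (m : ℝ)) : EReal)) (h := hC)
    refine (hfreq.and_eventually (eventually_ge_atTop 1)).mono ?_
    rintro m ⟨hm, hm1⟩
    refine ⟨hm1, ?_⟩
    have hmpos : (0 : ℝ) < m := by exact_mod_cast hm1
    have : ((padicDist p m a : ℝ) / (m : ℝ) : ℝ) < C := by
      rw [← EReal.coe_lt_coe_iff]
      rw [EReal.coe_div]
      exact hm
    rw [div_lt_iff₀ hmpos] at this
    linarith

end Helpers

/-- If `A_1,…,A_k` form a Liouville partition of `A` and `B_g` is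
weakly equivalent to `A_g` for each `g`, then `B_1,…,B_k` form a Liouville partition of
their multiset union; in particular the `B_g` are pairwise disjoint. -/
theorem liouvillePartition_of_weaklyEquivalent_parts
    (p : ℕ) [Fact p.Prime] {k : ℕ}
    (A : Multiset ℤ_[p]) (PA PB : Fin k → Multiset ℤ_[p])
    (hA : IsLiouvillePartition p A PA)
    (hW : ∀ g, WeaklyEquivalent p (PB g) (PA g)) :
    IsLiouvillePartition p (∑ g, PB g) PB ∧
      ∀ g h : Fin k, g ≠ h → Disjoint (PB g) (PB h) := by
  have key : ∀ g h : Fin k, g ≠ h → ∀ x ∈ PB g, ∀ y ∈ PB h,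
      ¬ ((∃ n : ℤ, x - y = (n : ℤ_[p])) ∨ IsPadicLiouville p (x - y)) := by
    intro g1 g2 hgh x hx y hy hxy
    obtain ⟨n1, a1, b1, c1, hPB1, hPA1, hc1, hσ1⟩ := hW g1
    obtain ⟨n2, a2, b2, c2, hPB2, hPA2, hc2, hσ2⟩ := hW g2
    rw [hPB1, Multiset.mem_coe, List.mem_ofFn] at hx
    rw [hPB2, Multiset.mem_coe, List.mem_ofFn] at hy
    obtain ⟨i1, hi1⟩ := hx
    obtain ⟨i2, hi2⟩ := hy
    -- from hxy, get a constant C and infinitely many m with d_m(x-y) ≤ C m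
    obtain ⟨C, hC⟩ := frequently_of_int_or_liouville (a := x - y) hxy
    -- for each m ≥ 1 there are indices j1 j2 with x, y close to b1 j1, b2 j2
    have hgood : ∀ m : ℕ, 1 ≤ m → ∃ q : Fin n1 × Fin n2,
        (padicDist p m (x - b1 q.1) : ℝ) ≤ c1 * m ∧
        (padicDist p m (y - b2 q.2) : ℝ) ≤ c2 * m := by
      intro m hm
      obtain ⟨σ, hσ⟩ := hσ1 m hm
      obtain ⟨τ, hτ⟩ := hσ2 m hm
      refine ⟨(σ.symm i1, τ.symm i2), ?_, ?_⟩
      · have := hσ (σ.symm i1); rwa [Equiv.apply_symm_apply, hi1] at this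
      · have := hτ (τ.symm i2); rwa [Equiv.apply_symm_apply, hi2] at this
    classical
    have hne1 : Nonempty (Fin n1) := ⟨i1⟩
    have hne2 : Nonempty (Fin n2) := ⟨i2⟩
    set F : ℕ → Fin n1 × Fin n2 := fun m =>
      if hm : 1 ≤ m then (hgood m hm).choose else Classical.arbitrary _ with hF
    set S : Set ℕ := {m | (1 ≤ m ∧ (padicDist p m (x - y) : ℝ) ≤ C * m)} with hS
    have hSinf : S.Infinite := Nat.frequently_atTop_iff_infinite.mp hC
    -- pigeonhole
    obtain ⟨q, hq⟩ : ∃ q : Fin n1 × Fin n2, {m ∈ S | F m = q}.Infinite := by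
      by_contra hcon
      push_neg at hcon
      have : S ⊆ ⋃ q : Fin n1 × Fin n2, {m ∈ S | F m = q} := by
        intro m hm; exact Set.mem_iUnion.mpr ⟨F m, hm, rfl⟩
      exact hSinf ((Set.finite_iUnion hcon).subset this)
    have hamem : b1 q.1 ∈ PA g1 := by
      rw [hPA1, Multiset.mem_coe, List.mem_ofFn]; exact ⟨q.1, rfl⟩
    have hbmem : b2 q.2 ∈ PA g2 := by
      rw [hPA2, Multiset.mem_coe, List.mem_ofFn]; exact ⟨q.2, rfl⟩
    refine hA.2 g1 g2 hgh (b1 q.1) hamem (b2 q.2) hbmem ?_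
    refine int_or_liouville_of_frequently (K := c1 + C + c2) ?_
    have hfreq : ∃ᶠ m : ℕ in atTop, m ∈ {m ∈ S | F m = q} :=
      Nat.frequently_atTop_iff_infinite.mpr hq
    refine hfreq.mono ?_
    rintro m ⟨⟨hm1, hmC⟩, hmq⟩
    refine ⟨hm1, ?_⟩
    have hFq : (hgood m hm1).choose = q := by simpa only [hF, dif_pos hm1] using hmq
    have hspec := (hgood m hm1).choose_spec
    rw [hFq] at hspec
    obtain ⟨h1b, h2b⟩ := hspec
    -- combine: b1 q.1 - b2 q.2 = -(x - b1 q.1) + (x - y) + (y - b2 q.2)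
    have heq : b1 q.1 - b2 q.2 = -(x - b1 q.1) + ((x - y) + (y - b2 q.2)) := by ring
    have hdb : padicDist p m (b1 q.1 - b2 q.2) ≤
        padicDist p m (x - b1 q.1) + (padicDist p m (x - y) + padicDist p m (y - b2 q.2)) := by
      rw [heq]
      calc padicDist p m (-(x - b1 q.1) + ((x - y) + (y - b2 q.2)))
          ≤ padicDist p m (-(x - b1 q.1)) + padicDist p m ((x - y) + (y - b2 q.2)) :=
            padicDist_add_le m _ _
        _ ≤ _ := by
            rw [padicDist_neg]
            exact Nat.add_le_add_left (padicDist_add_le m _ _) _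
    have hdbR : (padicDist p m (b1 q.1 - b2 q.2) : ℝ) ≤
        (padicDist p m (x - b1 q.1) : ℝ) + ((padicDist p m (x - y) : ℝ)
          + (padicDist p m (y - b2 q.2) : ℝ)) := by exact_mod_cast hdb
    calc (padicDist p m (b1 q.1 - b2 q.2) : ℝ) ≤ _ := hdbR
      _ ≤ c1 * m + (C * m + c2 * m) := by gcongr
      _ = (c1 + C + c2) * m := by ring
  refine ⟨⟨rfl, key⟩, ?_⟩
  intro g1 g2 hgh
  rw [Multiset.disjoint_left]
  intro z hz1 hz2
  exact key g1 g2 hgh z hz1 z hz2 (Or.inl ⟨0, by simp⟩)
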